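/- Multiset reformulation of q-factorization existence: let q ∈ ℂ× not be a root of unity and let S be a finite multiset of elements of ℂ×. Then S can be partitioned into q-strings Σ(a,r) = {aq^{r−1}, aq^{r−3}, …, aq^{1−r}} (a ∈ ℂ×, r ≥ 1) such that for any two strings Σ(a,r), Σ(b,s) in the partition, a/b ≠ q^{±(r+s−2p)} for all 0 ≤ p < min{r,s}. -/

import Mathlib

/-- The q-string of length `r` centered at `a`: the multiset
`{aq^{r−1}, aq^{r−3}, …, aq^{1−r}}`. -/
noncomputable def qstring (q a : ℂˣ) (r : ℕ) : Multiset ℂˣ :=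
  (Multiset.range r).map fun l => a * q ^ ((r : ℤ) - 1 - 2 * (l : ℤ))

/-- The non-resonance condition between two q-strings `(a,r)` and `(b,s)`:
`a/b ≠ q^{±(r+s−2p)}` for all `0 ≤ p < min{r,s}`. -/
def nonres (q : ℂˣ) (x y : ℂˣ × ℕ) : Prop :=
  ∀ p : ℕ, p < min x.2 y.2 →
    x.1 / y.1 ≠ q ^ ((x.2 : ℤ) + (y.2 : ℤ) - 2 * (p : ℤ)) ∧
    x.1 / y.1 ≠ (q ^ ((x.2 : ℤ) + (y.2 : ℤ) - 2 * (p : ℤ)))⁻¹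

lemma nonres_symm (q : ℂˣ) (x y : ℂˣ × ℕ) (h : nonres q x y) : nonres q y x := by
  intro p hp
  obtain ⟨h1, h2⟩ := h p (by omega)
  have hE : (y.2 : ℤ) + (x.2 : ℤ) - 2 * (p : ℤ) = (x.2 : ℤ) + (y.2 : ℤ) - 2 * (p : ℤ) := by ring
  rw [hE]
  constructor
  · intro e
    apply h2
    rw [← inv_div y.1 x.1, e]
  · intro e
    apply h1
    rw [← inv_div y.1 x.1, e, inv_inv]

lemma qstring_eq (q a : ℂˣ) (r : ℕ) :
    qstring q a r =
      (Multiset.range r).map (fun l : ℕ => a * q ^ ((r : ℤ) - 1 - 2 * (l : ℤ))) := by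
  rw [qstring]
  have h0 : (do let l ← Multiset.range r; pure ((l : ℕ) : ℤ)) =
      (Multiset.range r).map (fun l : ℕ => (l : ℤ)) := by
    show (Multiset.range r).bind (fun l : ℕ => {(l : ℤ)}) = _
    rw [Multiset.bind_singleton]
  rw [h0, Multiset.map_map]
  rfl

lemma mem_qstring (q b : ℂˣ) (s : ℕ) (m : ℕ) (hm : m < s) :
    b * q ^ ((s : ℤ) - 1 - 2 * (m : ℤ)) ∈ qstring q b s := by
  rw [qstring_eq]
  exact Multiset.mem_map_of_mem (fun l : ℕ => b * q ^ ((s : ℤ) - 1 - 2 * (l : ℤ)))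
    (Multiset.mem_range.mpr hm)

/-- Key non-resonance lemma: if the string `(c,r)` is a maximal run in `S`
(its just-above and just-below points are not in `S`) and all elements of the
string `(b,s)` lie in `S`, then `(c,r)` and `(b,s)` are non-resonant. -/
lemma key (q : ℂˣ) (S : Multiset ℂˣ) (c b : ℂˣ) (r s : ℕ)
    (helem : ∀ m : ℕ, m < s → b * q ^ ((s : ℤ) - 1 - 2 * (m : ℤ)) ∈ S)
    (htop : c * q ^ ((r : ℤ) + 1) ∉ S)
    (hbot : c * q ^ (-(r : ℤ) - 1) ∉ S) :
    nonres q (c, r) (b, s) := by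
  intro p hp
  simp only [Prod.fst, Prod.snd] at *
  have hpr : p < r := lt_of_lt_of_le hp (min_le_left _ _)
  have hps : p < s := lt_of_lt_of_le hp (min_le_right _ _)
  constructor
  · intro e
    apply hbot
    rw [div_eq_iff_eq_mul] at e
    rw [e, mul_comm _ b, mul_assoc, ← zpow_add]
    have h1 : (r : ℤ) + (s : ℤ) - 2 * (p : ℤ) + (-(r : ℤ) - 1) = (s : ℤ) - 1 - 2 * (p : ℤ) := by
      ring
    rw [h1]
    exact helem p hps
  · intro e
    apply htop
    rw [div_eq_iff_eq_mul] at e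
    rw [e, mul_comm _ b, ← zpow_neg, mul_assoc, ← zpow_add]
    have h1 : -((r : ℤ) + (s : ℤ) - 2 * (p : ℤ)) + ((r : ℤ) + 1) =
        (s : ℤ) - 1 - 2 * ((s - 1 - p : ℕ) : ℤ) := by
      have h2 : ((s - 1 - p : ℕ) : ℤ) = (s : ℤ) - 1 - (p : ℤ) := by omega
      rw [h2]; ring
    rw [h1]
    exact helem (s - 1 - p) (by omega)

/-- Multiset reformulation of q-factorization existence: every finite multiset `S` of
elements of `ℂˣ` can be partitioned into q-strings so that any two strings of the
partition are non-resonant. -/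
theorem stmt_18 (q : ℂˣ) (hq : ∀ k : ℕ, 1 ≤ k → q ^ k ≠ 1) (S : Multiset ℂˣ) :
    ∃ L : List (ℂˣ × ℕ), (∀ x ∈ L, 1 ≤ x.2) ∧
      (L.map fun x => qstring q x.1 x.2).sum = S ∧
      ∀ i j : Fin L.length, i ≠ j → nonres q (L.get i) (L.get j) := by
  -- injectivity of integer powers of q
  have hzpow : Function.Injective fun z : ℤ => q ^ z := by
    intro z w h
    simp only at h
    by_contra hne
    rcases lt_trichotomy z w with hlt | heq | hgt
    · apply hq (w - z).toNat (by omega)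
      have : ((w - z).toNat : ℤ) = w - z := by omega
      rw [← zpow_natCast, this, zpow_sub, h]
      simp
    · exact hne heq
    · apply hq (z - w).toNat (by omega)
      have : ((z - w).toNat : ℤ) = z - w := by omega
      rw [← zpow_natCast, this, zpow_sub, h]
      simp
  have hpow : Function.Injective fun k : ℕ => q ^ k := by
    intro k j h
    simp only at h
    have : q ^ (k : ℤ) = q ^ (j : ℤ) := by rw [zpow_natCast, zpow_natCast, h]
    have := hzpow this
    omega
  induction S using Multiset.strongInductionOn with
  | ih S IH =>
  by_cases hS : S = 0
  · subst hS
    exact ⟨[], by simp, by simp, fun i j _ => i.elim0⟩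
  obtain ⟨a, ha⟩ := Multiset.exists_mem_of_ne_zero hS
  -- the set of k with a * q^(2k) ∈ S is finite and nonempty; take its max
  have hFfin : {k : ℕ | a * q ^ (2 * k) ∈ S}.Finite := by
    have hset : {k : ℕ | a * q ^ (2 * k) ∈ S} =
        (fun k : ℕ => a * q ^ (2 * k)) ⁻¹' {x | x ∈ S} := rfl
    rw [hset]
    apply Set.Finite.preimage
    · intro x _ y _ hxy
      have := hpow (mul_left_cancel hxy)
      omega
    · exact S.finite_toSet
  have hF0 : 0 ∈ {k : ℕ | a * q ^ (2 * k) ∈ S} := by simpa using ha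
  have hFne : hFfin.toFinset.Nonempty := ⟨0, hFfin.mem_toFinset.mpr hF0⟩
  set k0 := hFfin.toFinset.max' hFne with hk0
  have hk0mem : a * q ^ (2 * k0) ∈ S :=
    hFfin.mem_toFinset.mp (hFfin.toFinset.max'_mem hFne)
  set a' := a * q ^ (2 * k0) with ha'
  have htopa : a' * q ^ 2 ∉ S := by
    intro hmem
    have h1 : a * q ^ (2 * (k0 + 1)) ∈ S := by
      have he : a * q ^ (2 * (k0 + 1)) = a' * q ^ 2 := by
        have h3 : 2 * (k0 + 1) = 2 * k0 + 2 := by ring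
        rw [h3, ha', mul_assoc, ← pow_add]
      rwa [he]
    have h2 : k0 + 1 ∈ hFfin.toFinset := hFfin.mem_toFinset.mpr h1
    have := hFfin.toFinset.le_max' _ h2
    omega
  -- the set of run-lengths below a'
  have hGfin : {n : ℕ | 0 < n ∧ ∀ l : ℕ, l < n → a' * (q ^ (2 * l))⁻¹ ∈ S}.Finite := by
    apply Set.Finite.subset (Set.finite_Icc 0 (S.toFinset.card))
    intro n hn
    simp only [Set.mem_Icc]
    refine ⟨Nat.zero_le _, ?_⟩
    have hcard : (Finset.range n).card ≤ S.toFinset.card := by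
      apply Finset.card_le_card_of_injOn (fun l => a' * (q ^ (2 * l))⁻¹)
      · intro l hl
        simp only [Finset.mem_coe, Multiset.mem_toFinset]
        exact hn.2 l (Finset.mem_range.mp hl)
      · intro x _ y _ hxy
        have := hpow (inv_injective (mul_left_cancel hxy))
        omega
    simpa using hcard
  have hG1 : 1 ∈ {n : ℕ | 0 < n ∧ ∀ l : ℕ, l < n → a' * (q ^ (2 * l))⁻¹ ∈ S} := by
    refine ⟨Nat.one_pos, fun l hl => ?_⟩
    interval_cases l
    simpa using hk0mem
  have hGne : hGfin.toFinset.Nonempty := ⟨1, hGfin.mem_toFinset.mpr hG1⟩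
  set r := hGfin.toFinset.max' hGne with hrdef
  have hrG : 0 < r ∧ ∀ l : ℕ, l < r → a' * (q ^ (2 * l))⁻¹ ∈ S :=
    hGfin.mem_toFinset.mp (hGfin.toFinset.max'_mem hGne)
  have hbota : a' * (q ^ (2 * r))⁻¹ ∉ S := by
    intro hmem
    have hmem2 : r + 1 ∈ hGfin.toFinset := by
      rw [hGfin.mem_toFinset]
      refine ⟨Nat.succ_pos _, fun l hl => ?_⟩
      rcases Nat.lt_or_ge l r with h | h
      · exact hrG.2 l h
      · have : l = r := by omega
        rwa [this]
    have := hGfin.toFinset.le_max' _ hmem2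
    omega
  -- the center of the removed string
  set c := a' * (q ^ ((r : ℤ) - 1))⁻¹ with hc
  have hcsimp : ∀ z : ℤ, c * q ^ z = a' * q ^ (z - ((r : ℤ) - 1)) := by
    intro z
    rw [hc, ← zpow_neg, mul_assoc, ← zpow_add]
    ring_nf
  have helemc : ∀ l : ℕ, l < r → c * q ^ ((r : ℤ) - 1 - 2 * (l : ℤ)) ∈ S := by
    intro l hl
    rw [hcsimp]
    have h1 : (r : ℤ) - 1 - 2 * (l : ℤ) - ((r : ℤ) - 1) = -((2 * l : ℕ) : ℤ) := by
      push_cast; ring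
    rw [h1, zpow_neg, zpow_natCast]
    exact hrG.2 l hl
  have htopc : c * q ^ ((r : ℤ) + 1) ∉ S := by
    rw [hcsimp]
    have h1 : (r : ℤ) + 1 - ((r : ℤ) - 1) = ((2 : ℕ) : ℤ) := by push_cast; ring
    rw [h1, zpow_natCast]
    exact htopa
  have hbotc : c * q ^ (-(r : ℤ) - 1) ∉ S := by
    rw [hcsimp]
    have h1 : -(r : ℤ) - 1 - ((r : ℤ) - 1) = -((2 * r : ℕ) : ℤ) := by push_cast; ring
    rw [h1, zpow_neg, zpow_natCast]
    exact hbota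
  -- the removed string is a sub-multiset of S
  have hMnodup : (qstring q c r).Nodup := by
    rw [qstring_eq]
    refine Multiset.Nodup.map_on ?_ (Multiset.nodup_range r)
    intro x _ y _ hxy
    have h2 := hzpow (mul_left_cancel hxy)
    omega
  have hMS : qstring q c r ≤ S := by
    rw [Multiset.le_iff_count]
    intro x
    by_cases hx : x ∈ qstring q c r
    · rw [Multiset.count_eq_one_of_mem hMnodup hx]
      rw [Nat.one_le_iff_ne_zero, Ne, Multiset.count_eq_zero, not_not]
      rw [qstring_eq] at hx
      obtain ⟨l, hl, rfl⟩ := Multiset.mem_map.mp hx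
      exact helemc l (Multiset.mem_range.mp hl)
    · rw [Multiset.count_eq_zero_of_notMem hx]
      exact Nat.zero_le _
  have hsum : qstring q c r + (S - qstring q c r) = S := add_tsub_cancel_of_le hMS
  have hlt : S - qstring q c r < S := by
    apply lt_of_le_of_ne tsub_le_self
    intro hEq
    have h0 : qstring q c r + (S - qstring q c r) = 0 + (S - qstring q c r) := by
      rw [zero_add, hsum, hEq]
    have hM0 : qstring q c r = 0 := add_right_cancel h0
    have : c * q ^ ((r : ℤ) - 1 - 2 * ((0 : ℕ) : ℤ)) ∈ qstring q c r :=
      mem_qstring q c r 0 hrG.1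
    rw [hM0] at this
    simp at this
  obtain ⟨L', hL1, hL2, hL3⟩ := IH _ hlt
  have hkey : ∀ x ∈ L', nonres q (c, r) x := by
    intro x hx
    have hqs : qstring q x.1 x.2 ≤ S - qstring q c r := by
      rw [← hL2]
      exact List.le_sum_of_mem (List.mem_map_of_mem hx)
    refine key q S c x.1 r x.2 (fun m hm => ?_) htopc hbotc
    exact Multiset.mem_of_le (le_trans hqs tsub_le_self) (mem_qstring q x.1 x.2 m hm)
  refine ⟨(c, r) :: L', ?_, ?_, ?_⟩
  · intro x hx
    rcases List.mem_cons.mp hx with rfl | hx'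
    · exact hrG.1
    · exact hL1 x hx'
  · rw [List.map_cons, List.sum_cons, hL2]
    exact hsum
  · rintro ⟨iv, hi⟩ ⟨jv, hj⟩ hij
    simp only [List.length_cons] at hi hj
    match iv, jv with
    | 0, 0 => simp at hij
    | 0, jv + 1 =>
      have hget : ((c, r) :: L').get ⟨jv + 1, by simpa using hj⟩ =
          L'.get ⟨jv, by omega⟩ := rfl
      show nonres q (((c, r) :: L').get _) (((c, r) :: L').get _)
      rw [hget]
      exact hkey _ (L'.get_mem _)
    | iv + 1, 0 =>
      have hget : ((c, r) :: L').get ⟨iv + 1, by simpa using hi⟩ =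
          L'.get ⟨iv, by omega⟩ := rfl
      show nonres q (((c, r) :: L').get _) (((c, r) :: L').get _)
      rw [hget]
      exact nonres_symm _ _ _ (hkey _ (L'.get_mem _))
    | iv + 1, jv + 1 =>
      show nonres q (L'.get ⟨iv, by omega⟩) (L'.get ⟨jv, by omega⟩)
      refine hL3 _ _ ?_
      simp only [ne_eq, Fin.mk.injEq] at hij ⊢
      omega
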